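/- arXiv:2308.03265 — 5 statements merged into one kernel-verified Lean document; each statement's English description precedes it below -/
import Mathlib

section
/- The discriminant of the polynomial x^7 - x^6 - 2x^5 + 6x^4 - 11x^3 + 6x^2 + 3x - 1 is -7215127, and -7215127 is (up to sign) a prime number. -/
open Polynomial

noncomputable def auxM : Matrix (Fin 7) (Fin 7) ℂ := !![7,1,5,-11,37,-34,137; 1,5,-11,37,-34,137,-300; 5,-11,37,-34,137,-300,637; -11,37,-34,137,-300,637,-1343; 37,-34,137,-300,637,-1343,3320; -34,137,-300,637,-1343,3320,-7171; 137,-300,637,-1343,3320,-7171,15889]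

noncomputable def auxL : Matrix (Fin 7) (Fin 7) ℂ := !![1,0,0,0,0,0,0; (1/7),1,0,0,0,0,0; (5/7),(-41/17),1,0,0,0,0; (-11/7),(135/17),(1137/88),1,0,0,0; (37/7),(-275/34),(269/88),(11821/92465),1,0,0; (-34/7),(993/34),(1129/88),(123289/92465),(-7362249/17102309),1,0; (137/7),(-2237/34),(-3937/88),(-387401/92465),(4126853/2443187),(-61764353/182548658),1]

noncomputable def auxU : Matrix (Fin 7) (Fin 7) ℂ := !![7,1,5,-11,37,-34,137; 0,(34/7),(-82/7),(270/7),(-275/7),(993/7),(-2237/7); 0,0,(88/17),(1137/17),(269/17),(1129/17),(-3937/17); 0,0,0,(-92465/88),(-11821/88),(-123289/88),(387401/88); 0,0,0,0,(17102309/184930),(-7362249/184930),(28887971/184930); 0,0,0,0,0,(182548658/17102309),(-8823479/2443187); 0,0,0,0,0,0,(7215127/182548658)]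

set_option maxHeartbeats 1000000 in
theorem auxM_det : auxM.det = -7215127 := by
  have hLU : auxM = auxL * auxU := by
    ext i j
    fin_cases i <;> fin_cases j <;>
      norm_num [auxM, auxL, auxU, Matrix.mul_apply, Fin.sum_univ_succ]
  have hL : auxL.det = 1 := by
    have h : auxL.BlockTriangular OrderDual.toDual := by
      intro i j hij
      fin_cases i <;> fin_cases j <;> first | rfl | (exact absurd hij (by decide))
    rw [Matrix.det_of_lowerTriangular auxL h]
    norm_num [auxL, Fin.prod_univ_succ]
  have hU : auxU.det = -7215127 := by
    have h : auxU.BlockTriangular id := by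
      intro i j hij
      fin_cases i <;> fin_cases j <;> first | rfl | (exact absurd hij (by decide))
    rw [Matrix.det_of_upperTriangular h]
    norm_num [auxU, Fin.prod_univ_succ]
  rw [hLU, Matrix.det_mul, hL, hU, one_mul]

set_option maxHeartbeats 4000000 in
/-- The discriminant of `p(x) = x^7 - x^6 - 2x^5 + 6x^4 - 11x^3 + 6x^2 + 3x - 1` is `-7215127`,
which is (up to sign) a prime number.  Since `p` is monic of degree `7`, its discriminant is
`∏_{i<j} (r_i - r_j)^2` where `r_1, …, r_7` are its complex roots. -/
theorem stmt_2 (r : Fin 7 → ℂ)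
    (hr : (X ^ 7 - X ^ 6 - 2 * X ^ 5 + 6 * X ^ 4 - 11 * X ^ 3 + 6 * X ^ 2 + 3 * X - 1 :
        Polynomial ℂ) = ∏ i : Fin 7, (X - C (r i))) :
    (∏ i : Fin 7, ∏ j ∈ Finset.univ.filter (fun j => i < j), (r i - r j) ^ 2) = -7215127 ∧
      Nat.Prime 7215127 := by
  have key : ∀ t : ℂ, (t - r 0)*(t - r 1)*(t - r 2)*(t - r 3)*(t - r 4)*(t - r 5)*(t - r 6)
      = t^7 - t^6 - 2*t^5 + 6*t^4 - 11*t^3 + 6*t^2 + 3*t - 1 := by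
    intro t
    have h := congrArg (eval t) hr
    simp only [eval_sub, eval_add, eval_mul, eval_pow, eval_X, eval_C, eval_ofNat, eval_one,
      eval_prod, Fin.prod_univ_seven] at h
    linear_combination -h
  have hE1 : r 0 + r 1 + r 2 + r 3 + r 4 + r 5 + r 6 = 1 := by
    linear_combination ((-1:ℂ)/720) * key (-3) + ((1:ℂ)/120) * key (-2) + ((-1:ℂ)/48) * key (-1) + ((1:ℂ)/36) * key (0) + ((-1:ℂ)/48) * key (1) + ((1:ℂ)/120) * key (2) + ((-1:ℂ)/720) * key (3)
  have hE2 : r 0*r 1 + r 0*r 2 + r 0*r 3 + r 0*r 4 + r 0*r 5 + r 0*r 6 + r 1*r 2 + r 1*r 3 + r 1*r 4 + r 1*r 5 + r 1*r 6 + r 2*r 3 + r 2*r 4 + r 2*r 5 + r 2*r 6 + r 3*r 4 + r 3*r 5 + r 3*r 6 + r 4*r 5 + r 4*r 6 + r 5*r 6 = -2 := by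
    linear_combination ((-1:ℂ)/720) * key (-3) + ((-1:ℂ)/360) * key (-2) + ((3:ℂ)/80) * key (-1) + ((-7:ℂ)/72) * key (0) + ((17:ℂ)/144) * key (1) + ((-3:ℂ)/40) * key (2) + ((17:ℂ)/720) * key (3) + ((-1:ℂ)/360) * key (4)
  have hE3 : r 0*r 1*r 2 + r 0*r 1*r 3 + r 0*r 1*r 4 + r 0*r 1*r 5 + r 0*r 1*r 6 + r 0*r 2*r 3 + r 0*r 2*r 4 + r 0*r 2*r 5 + r 0*r 2*r 6 + r 0*r 3*r 4 + r 0*r 3*r 5 + r 0*r 3*r 6 + r 0*r 4*r 5 + r 0*r 4*r 6 + r 0*r 5*r 6 + r 1*r 2*r 3 + r 1*r 2*r 4 + r 1*r 2*r 5 + r 1*r 2*r 6 + r 1*r 3*r 4 + r 1*r 3*r 5 + r 1*r 3*r 6 + r 1*r 4*r 5 + r 1*r 4*r 6 + r 1*r 5*r 6 + r 2*r 3*r 4 + r 2*r 3*r 5 + r 2*r 3*r 6 + r 2*r 4*r 5 + r 2*r 4*r 6 + r 2*r 5*r 6 + r 3*r 4*r 5 + r 3*r 4*r 6 + r 3*r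 5*r 6 + r 4*r 5*r 6 = -6 := by
    linear_combination ((1:ℂ)/144) * key (-3) + ((-1:ℂ)/12) * key (-2) + ((13:ℂ)/48) * key (-1) + ((-7:ℂ)/18) * key (0) + ((13:ℂ)/48) * key (1) + ((-1:ℂ)/12) * key (2) + ((1:ℂ)/144) * key (3)
  have hE4 : r 0*r 1*r 2*r 3 + r 0*r 1*r 2*r 4 + r 0*r 1*r 2*r 5 + r 0*r 1*r 2*r 6 + r 0*r 1*r 3*r 4 + r 0*r 1*r 3*r 5 + r 0*r 1*r 3*r 6 + r 0*r 1*r 4*r 5 + r 0*r 1*r 4*r 6 + r 0*r 1*r 5*r 6 + r 0*r 2*r 3*r 4 + r 0*r 2*r 3*r 5 + r 0*r 2*r 3*r 6 + r 0*r 2*r 4*r 5 + r 0*r 2*r 4*r 6 + r 0*r 2*r 5*r 6 + r 0*r 3*r 4*r 5 + r 0*r 3*r 4*r 6 + r 0*r 3*r 5*r 6 + r 0*r 4*r 5*r 6 + r 1*r 2*r 3*r 4 + r 1*r 2*r 3*r 5 + r 1*r 2*r 3*r 6 + r 1*r 2*r 4*r 5 + r 1*r 2*r 4*r 6 + r 1*r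 2*r 5*r 6 + r 1*r 3*r 4*r 5 + r 1*r 3*r 4*r 6 + r 1*r 3*r 5*r 6 + r 1*r 4*r 5*r 6 + r 2*r 3*r 4*r 5 + r 2*r 3*r 4*r 6 + r 2*r 3*r 5*r 6 + r 2*r 4*r 5*r 6 + r 3*r 4*r 5*r 6 = -11 := by
    linear_combination ((1:ℂ)/90) * key (-3) + ((-71:ℂ)/720) * key (-2) + ((1:ℂ)/15) * key (-1) + ((49:ℂ)/144) * key (0) + ((-11:ℂ)/18) * key (1) + ((89:ℂ)/240) * key (2) + ((-4:ℂ)/45) * key (3) + ((7:ℂ)/720) * key (4)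
  have hE5 : r 0*r 1*r 2*r 3*r 4 + r 0*r 1*r 2*r 3*r 5 + r 0*r 1*r 2*r 3*r 6 + r 0*r 1*r 2*r 4*r 5 + r 0*r 1*r 2*r 4*r 6 + r 0*r 1*r 2*r 5*r 6 + r 0*r 1*r 3*r 4*r 5 + r 0*r 1*r 3*r 4*r 6 + r 0*r 1*r 3*r 5*r 6 + r 0*r 1*r 4*r 5*r 6 + r 0*r 2*r 3*r 4*r 5 + r 0*r 2*r 3*r 4*r 6 + r 0*r 2*r 3*r 5*r 6 + r 0*r 2*r 4*r 5*r 6 + r 0*r 3*r 4*r 5*r 6 + r 1*r 2*r 3*r 4*r 5 + r 1*r 2*r 3*r 4*r 6 + r 1*r 2*r 3*r 5*r 6 + r 1*r 2*r 4*r 5*r 6 + r 1*r 3*r 4*r 5*r 6 + r 2*r 3*r 4*r 5*r 6 = -6 := by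
    linear_combination ((-1:ℂ)/180) * key (-3) + ((3:ℂ)/40) * key (-2) + ((-3:ℂ)/4) * key (-1) + ((49:ℂ)/36) * key (0) + ((-3:ℂ)/4) * key (1) + ((3:ℂ)/40) * key (2) + ((-1:ℂ)/180) * key (3)
  have hE6 : r 0*r 1*r 2*r 3*r 4*r 5 + r 0*r 1*r 2*r 3*r 4*r 6 + r 0*r 1*r 2*r 3*r 5*r 6 + r 0*r 1*r 2*r 4*r 5*r 6 + r 0*r 1*r 3*r 4*r 5*r 6 + r 0*r 2*r 3*r 4*r 5*r 6 + r 1*r 2*r 3*r 4*r 5*r 6 = 3 := by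
    linear_combination ((-1:ℂ)/105) * key (-3) + ((1:ℂ)/10) * key (-2) + ((-3:ℂ)/5) * key (-1) + ((-1:ℂ)/4) * key (0) + (1) * key (1) + ((-3:ℂ)/10) * key (2) + ((1:ℂ)/15) * key (3) + ((-1:ℂ)/140) * key (4)
  have hE7 : r 0*r 1*r 2*r 3*r 4*r 5*r 6 = 1 := by
    linear_combination (-1) * key (0)
  have h0 : (r 0)^7 - (r 0)^6 - 2*(r 0)^5 + 6*(r 0)^4 - 11*(r 0)^3 + 6*(r 0)^2 + 3*(r 0) - 1 = 0 := by
    linear_combination -key (r 0)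
  have h1 : (r 1)^7 - (r 1)^6 - 2*(r 1)^5 + 6*(r 1)^4 - 11*(r 1)^3 + 6*(r 1)^2 + 3*(r 1) - 1 = 0 := by
    linear_combination -key (r 1)
  have h2 : (r 2)^7 - (r 2)^6 - 2*(r 2)^5 + 6*(r 2)^4 - 11*(r 2)^3 + 6*(r 2)^2 + 3*(r 2) - 1 = 0 := by
    linear_combination -key (r 2)
  have h3 : (r 3)^7 - (r 3)^6 - 2*(r 3)^5 + 6*(r 3)^4 - 11*(r 3)^3 + 6*(r 3)^2 + 3*(r 3) - 1 = 0 := by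
    linear_combination -key (r 3)
  have h4 : (r 4)^7 - (r 4)^6 - 2*(r 4)^5 + 6*(r 4)^4 - 11*(r 4)^3 + 6*(r 4)^2 + 3*(r 4) - 1 = 0 := by
    linear_combination -key (r 4)
  have h5 : (r 5)^7 - (r 5)^6 - 2*(r 5)^5 + 6*(r 5)^4 - 11*(r 5)^3 + 6*(r 5)^2 + 3*(r 5) - 1 = 0 := by
    linear_combination -key (r 5)
  have h6 : (r 6)^7 - (r 6)^6 - 2*(r 6)^5 + 6*(r 6)^4 - 11*(r 6)^3 + 6*(r 6)^2 + 3*(r 6) - 1 = 0 := by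
    linear_combination -key (r 6)
  have hS1 : r 0 + r 1 + r 2 + r 3 + r 4 + r 5 + r 6 = 1 := hE1
  have hS2 : r 0^2 + r 1^2 + r 2^2 + r 3^2 + r 4^2 + r 5^2 + r 6^2 = 5 := by
    linear_combination (r 0 + r 1 + r 2 + r 3 + r 4 + r 5 + r 6 + 1)*hE1 - 2*hE2
  have hS3 : r 0^3 + r 1^3 + r 2^3 + r 3^3 + r 4^3 + r 5^3 + r 6^3 = -11 := by
    linear_combination (r 0^2 + r 1^2 + r 2^2 + r 3^2 + r 4^2 + r 5^2 + r 6^2)*hE1 + hS2 - (r 0 + r 1 + r 2 + r 3 + r 4 + r 5 + r 6)*hE2 + 2*hS1 + 3*hE3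
  have hS4 : r 0^4 + r 1^4 + r 2^4 + r 3^4 + r 4^4 + r 5^4 + r 6^4 = 37 := by
    linear_combination (r 0^3 + r 1^3 + r 2^3 + r 3^3 + r 4^3 + r 5^3 + r 6^3)*hE1 + hS3 - (r 0^2 + r 1^2 + r 2^2 + r 3^2 + r 4^2 + r 5^2 + r 6^2)*hE2 + 2*hS2 + (r 0 + r 1 + r 2 + r 3 + r 4 + r 5 + r 6)*hE3 - 6*hS1 - 4*hE4
  have hS5 : r 0^5 + r 1^5 + r 2^5 + r 3^5 + r 4^5 + r 5^5 + r 6^5 = -34 := by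
    linear_combination (r 0^4 + r 1^4 + r 2^4 + r 3^4 + r 4^4 + r 5^4 + r 6^4)*hE1 + hS4 - (r 0^3 + r 1^3 + r 2^3 + r 3^3 + r 4^3 + r 5^3 + r 6^3)*hE2 + 2*hS3 + (r 0^2 + r 1^2 + r 2^2 + r 3^2 + r 4^2 + r 5^2 + r 6^2)*hE3 - 6*hS2 - (r 0 + r 1 + r 2 + r 3 + r 4 + r 5 + r 6)*hE4 + 11*hS1 + 5*hE5
  have hS6 : r 0^6 + r 1^6 + r 2^6 + r 3^6 + r 4^6 + r 5^6 + r 6^6 = 137 := by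
    linear_combination (r 0^5 + r 1^5 + r 2^5 + r 3^5 + r 4^5 + r 5^5 + r 6^5)*hE1 + hS5 - (r 0^4 + r 1^4 + r 2^4 + r 3^4 + r 4^4 + r 5^4 + r 6^4)*hE2 + 2*hS4 + (r 0^3 + r 1^3 + r 2^3 + r 3^3 + r 4^3 + r 5^3 + r 6^3)*hE3 - 6*hS3 - (r 0^2 + r 1^2 + r 2^2 + r 3^2 + r 4^2 + r 5^2 + r 6^2)*hE4 + 11*hS2 + (r 0 + r 1 + r 2 + r 3 + r 4 + r 5 + r 6)*hE5 - 6*hS1 - 6*hE6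
  have hS7 : r 0^7 + r 1^7 + r 2^7 + r 3^7 + r 4^7 + r 5^7 + r 6^7 = -300 := by
    linear_combination h0 + h1 + h2 + h3 + h4 + h5 + h6 + hS6 + 2*hS5 - 6*hS4 + 11*hS3 - 6*hS2 - 3*hS1
  have hS8 : r 0^8 + r 1^8 + r 2^8 + r 3^8 + r 4^8 + r 5^8 + r 6^8 = 637 := by
    linear_combination (r 0)*h0 + (r 1)*h1 + (r 2)*h2 + (r 3)*h3 + (r 4)*h4 + (r 5)*h5 + (r 6)*h6 + hS7 + 2*hS6 - 6*hS5 + 11*hS4 - 6*hS3 - 3*hS2 + hS1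
  have hS9 : r 0^9 + r 1^9 + r 2^9 + r 3^9 + r 4^9 + r 5^9 + r 6^9 = -1343 := by
    linear_combination (r 0)^2*h0 + (r 1)^2*h1 + (r 2)^2*h2 + (r 3)^2*h3 + (r 4)^2*h4 + (r 5)^2*h5 + (r 6)^2*h6 + hS8 + 2*hS7 - 6*hS6 + 11*hS5 - 6*hS4 - 3*hS3 + hS2
  have hS10 : r 0^10 + r 1^10 + r 2^10 + r 3^10 + r 4^10 + r 5^10 + r 6^10 = 3320 := by
    linear_combination (r 0)^3*h0 + (r 1)^3*h1 + (r 2)^3*h2 + (r 3)^3*h3 + (r 4)^3*h4 + (r 5)^3*h5 + (r 6)^3*h6 + hS9 + 2*hS8 - 6*hS7 + 11*hS6 - 6*hS5 - 3*hS4 + hS3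
  have hS11 : r 0^11 + r 1^11 + r 2^11 + r 3^11 + r 4^11 + r 5^11 + r 6^11 = -7171 := by
    linear_combination (r 0)^4*h0 + (r 1)^4*h1 + (r 2)^4*h2 + (r 3)^4*h3 + (r 4)^4*h4 + (r 5)^4*h5 + (r 6)^4*h6 + hS10 + 2*hS9 - 6*hS8 + 11*hS7 - 6*hS6 - 3*hS5 + hS4
  have hS12 : r 0^12 + r 1^12 + r 2^12 + r 3^12 + r 4^12 + r 5^12 + r 6^12 = 15889 := by
    linear_combination (r 0)^5*h0 + (r 1)^5*h1 + (r 2)^5*h2 + (r 3)^5*h3 + (r 4)^5*h4 + (r 5)^5*h5 + (r 6)^5*h6 + hS11 + 2*hS10 - 6*hS9 + 11*hS8 - 6*hS7 - 3*hS6 + hS5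
  refine ⟨?_, by norm_num⟩
  have hIoi : ∀ i : Fin 7, Finset.univ.filter (fun j => i < j) = Finset.Ioi i := by
    intro i; ext j; simp
  have step1 : (∏ i : Fin 7, ∏ j ∈ Finset.univ.filter (fun j => i < j), (r i - r j) ^ 2)
      = ((Matrix.vandermonde r).det) ^ 2 := by
    rw [Matrix.det_vandermonde, ← Finset.prod_pow]
    refine Finset.prod_congr rfl fun i _ => ?_
    rw [← Finset.prod_pow, hIoi i]
    exact Finset.prod_congr rfl fun j _ => by ring
  have step2 : ((Matrix.vandermonde r).det) ^ 2
      = ((Matrix.vandermonde r).transpose * Matrix.vandermonde r).det := by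
    rw [Matrix.det_mul, Matrix.det_transpose]; ring
  have step3 : (Matrix.vandermonde r).transpose * Matrix.vandermonde r = auxM := by
    ext i j
    fin_cases i <;> fin_cases j
    all_goals norm_num [Matrix.mul_apply, Matrix.transpose_apply, Matrix.vandermonde,
        Fin.sum_univ_seven, auxM]
    all_goals (first | linear_combination hS1 | linear_combination hS2 | linear_combination hS3 | linear_combination hS4 | linear_combination hS5 | linear_combination hS6 | linear_combination hS7 | linear_combination hS8 | linear_combination hS9 | linear_combination hS10 | linear_combination hS11 | linear_combination hS12)
  rw [step1, step2, step3, auxM_det]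
end

section
/- As formal power series in q (with coefficients in Q), the identity -q^{-1/8} Σ_{j,l=0}^{∞} ( q^{2(j+l+3/4)^2} - q^{2(j+l+7/4)^2} - q^{2(j+l+1/4)^2} + q^{2(j+l+5/4)^2} ) = Σ_{j=0}^{∞} (-1)^j q^{j(j+1)/2} holds. -/
namespace Stmt8

noncomputable def A (q : ℝ) (n : ℕ) : ℝ := q ^ (n * (2 * n + 1))
noncomputable def B (q : ℝ) (n : ℕ) : ℝ := q ^ ((n + 1) * (2 * n + 1))
noncomputable def c (q : ℝ) (n : ℕ) : ℝ := B q n - A q n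

variable {q : ℝ}

lemma summable_aux (h0 : 0 < q) (h1 : q < 1) {k : ℕ → ℕ} (hk : ∀ n, n ≤ k n) :
    Summable (fun n => q ^ k n) :=
  Summable.of_nonneg_of_le (fun n => by positivity)
    (fun n => pow_le_pow_of_le_one h0.le h1.le (hk n))
    (summable_geometric_of_lt_one h0.le h1)

lemma summable_A (h0 : 0 < q) (h1 : q < 1) (j : ℕ) :
    Summable (fun l => A q (j + l)) :=
  summable_aux h0 h1 (k := fun l => (j + l) * (2 * (j + l) + 1)) (fun l => by nlinarith)

lemma summable_B (h0 : 0 < q) (h1 : q < 1) (j : ℕ) :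
    Summable (fun l => B q (j + l)) :=
  summable_aux h0 h1 (k := fun l => ((j + l) + 1) * (2 * (j + l) + 1)) (fun l => by nlinarith)

lemma summable_c (h0 : 0 < q) (h1 : q < 1) (j : ℕ) :
    Summable (fun l => c q (j + l)) :=
  (summable_B h0 h1 j).sub (summable_A h0 h1 j)

lemma inner_sum (h0 : 0 < q) (h1 : q < 1) (j : ℕ) :
    ∑' l : ℕ, (c q (j + l + 1) - c q (j + l)) = A q j - B q j := by
  have hs : Summable (fun l => c q (j + l)) := summable_c h0 h1 j
  have hs' : Summable (fun l => c q (j + l + 1)) := by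
    have := summable_c h0 h1 (j + 1)
    simpa [show ∀ l, j + 1 + l = j + l + 1 from fun l => by omega] using this
  rw [Summable.tsum_sub hs' hs]
  have h2 : ∑' l : ℕ, c q (j + l) = c q j + ∑' l : ℕ, c q (j + l + 1) :=
    Summable.tsum_eq_zero_add hs
  have hc : c q j = B q j - A q j := rfl
  linarith

lemma summable_prod' (h0 : 0 < q) (h1 : q < 1) :
    Summable (fun p : ℕ × ℕ => c q (p.1 + p.2 + 1) - c q (p.1 + p.2)) := by
  have hgeo := summable_geometric_of_lt_one h0.le h1
  have hg : Summable (fun p : ℕ × ℕ => 4 * (q ^ p.1 * q ^ p.2)) :=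
    (hgeo.mul_of_nonneg hgeo (fun n => by positivity) (fun n => by positivity)).mul_left 4
  refine Summable.of_norm_bounded hg ?_
  intro p
  set n := p.1 + p.2 with hn
  have key : ∀ k : ℕ, n ≤ k → q ^ k ≤ q ^ p.1 * q ^ p.2 := by
    intro k hk
    rw [← pow_add]
    exact pow_le_pow_of_le_one h0.le h1.le hk
  have e1 := key ((n + 1 + 1) * (2 * (n + 1) + 1)) (by nlinarith)
  have e2 := key ((n + 1) * (2 * (n + 1) + 1)) (by nlinarith)
  have e3 := key ((n + 1) * (2 * n + 1)) (by nlinarith)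
  have e4 := key (n * (2 * n + 1)) (by nlinarith)
  have p1 := pow_pos h0 ((n + 1 + 1) * (2 * (n + 1) + 1))
  have p2 := pow_pos h0 ((n + 1) * (2 * (n + 1) + 1))
  have p3 := pow_pos h0 ((n + 1) * (2 * n + 1))
  have p4 := pow_pos h0 (n * (2 * n + 1))
  simp only [c, A, B, Real.norm_eq_abs]
  rw [abs_le]
  constructor <;> nlinarith

theorem stmt_8 (q : ℝ) (h0 : 0 < q) (h1 : q < 1) :
    -q ^ (-(1 / 8) : ℝ) *
        ∑' p : ℕ × ℕ,
          (q ^ (2 * ((p.1 + p.2 : ℝ) + 3 / 4) ^ 2) - q ^ (2 * ((p.1 + p.2 : ℝ) + 7 / 4) ^ 2)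
            - q ^ (2 * ((p.1 + p.2 : ℝ) + 1 / 4) ^ 2) + q ^ (2 * ((p.1 + p.2 : ℝ) + 5 / 4) ^ 2))
      = ∑' j : ℕ, (-1) ^ j * q ^ (j * (j + 1) / 2) := by
  have hA : Summable (A q) :=
    summable_aux h0 h1 (k := fun n => n * (2 * n + 1)) (fun n => by nlinarith)
  have hB : Summable (B q) :=
    summable_aux h0 h1 (k := fun n => (n + 1) * (2 * n + 1)) (fun n => by nlinarith)
  -- right-hand side
  have e_even : ∀ k : ℕ, (-1 : ℝ) ^ (2 * k) * q ^ (2 * k * (2 * k + 1) / 2) = A q k := by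
    intro k
    have h : 2 * k * (2 * k + 1) / 2 = k * (2 * k + 1) := by
      rw [show 2 * k * (2 * k + 1) = 2 * (k * (2 * k + 1)) by ring]
      exact Nat.mul_div_cancel_left _ (by norm_num)
    rw [h]
    simp [pow_mul, A]
  have e_odd : ∀ k : ℕ, (-1 : ℝ) ^ (2 * k + 1) * q ^ ((2 * k + 1) * (2 * k + 1 + 1) / 2)
      = -(B q k) := by
    intro k
    have h : (2 * k + 1) * (2 * k + 1 + 1) / 2 = (k + 1) * (2 * k + 1) := by
      rw [show (2 * k + 1) * (2 * k + 1 + 1) = 2 * ((k + 1) * (2 * k + 1)) by ring]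
      exact Nat.mul_div_cancel_left _ (by norm_num)
    rw [h]
    simp [pow_succ, pow_mul, B]
  have he : Summable (fun k : ℕ => (-1 : ℝ) ^ (2 * k) * q ^ (2 * k * (2 * k + 1) / 2)) :=
    hA.congr (fun k => (e_even k).symm)
  have ho : Summable (fun k : ℕ =>
      (-1 : ℝ) ^ (2 * k + 1) * q ^ ((2 * k + 1) * (2 * k + 1 + 1) / 2)) :=
    hB.neg.congr (fun k => (e_odd k).symm)
  have hrhs : ∑' j : ℕ, (-1 : ℝ) ^ j * q ^ (j * (j + 1) / 2)
      = ∑' n, A q n - ∑' n, B q n := by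
    have hsplit := tsum_even_add_odd (f := fun j : ℕ => (-1 : ℝ) ^ j * q ^ (j * (j + 1) / 2))
      he ho
    rw [← hsplit, tsum_congr e_even, tsum_congr e_odd, tsum_neg]
    ring
  rw [hrhs]
  -- left-hand side termwise identification
  have key : ∀ (N : ℕ) (x : ℝ), (N : ℝ) = x + -(1 / 8) →
      q ^ (-(1 / 8) : ℝ) * q ^ x = q ^ N := by
    intro N x hx
    rw [← Real.rpow_natCast q N, hx, ← Real.rpow_add h0]
    ring_nf
  have hterm : ∀ p : ℕ × ℕ,
      -(q ^ (-(1 / 8) : ℝ) *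
        (q ^ (2 * ((p.1 + p.2 : ℝ) + 3 / 4) ^ 2) - q ^ (2 * ((p.1 + p.2 : ℝ) + 7 / 4) ^ 2)
          - q ^ (2 * ((p.1 + p.2 : ℝ) + 1 / 4) ^ 2) + q ^ (2 * ((p.1 + p.2 : ℝ) + 5 / 4) ^ 2)))
      = c q (p.1 + p.2 + 1) - c q (p.1 + p.2) := by
    intro p
    have cast : ((p.1 : ℝ) + p.2) = ((p.1 + p.2 : ℕ) : ℝ) := by push_cast; ring
    rw [cast]
    set n := p.1 + p.2 with hn
    have k1 := key ((n + 1) * (2 * n + 1)) (2 * ((n : ℝ) + 3 / 4) ^ 2) (by push_cast; ring)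
    have k2 := key ((n + 1 + 1) * (2 * (n + 1) + 1)) (2 * ((n : ℝ) + 7 / 4) ^ 2)
      (by push_cast; ring)
    have k3 := key (n * (2 * n + 1)) (2 * ((n : ℝ) + 1 / 4) ^ 2) (by push_cast; ring)
    have k4 := key ((n + 1) * (2 * (n + 1) + 1)) (2 * ((n : ℝ) + 5 / 4) ^ 2) (by push_cast; ring)
    rw [mul_add, mul_sub, mul_sub, k1, k2, k3, k4]
    simp only [c, A, B]
    ring
  rw [neg_mul, ← tsum_mul_left, ← tsum_neg, tsum_congr hterm,
    Summable.tsum_prod' (summable_prod' h0 h1) (fun j => ((summable_c h0 h1 (j + 1)).congr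
      (fun l => by simp [show j + 1 + l = j + l + 1 from by omega])).sub (summable_c h0 h1 j)),
    tsum_congr (inner_sum h0 h1), Summable.tsum_sub hA hB]

end Stmt8

/-- The identity
`-q^{-1/8} Σ_{j,l≥0} (q^{2(j+l+3/4)^2} - q^{2(j+l+7/4)^2} - q^{2(j+l+1/4)^2} + q^{2(j+l+5/4)^2})
  = Σ_{j≥0} (-1)^j q^{j(j+1)/2}`,
stated for real `0 < q < 1` (using real powers `rpow` for the fractional exponents), which is
equivalent to the corresponding formal power series identity. -/
theorem stmt_8 (q : ℝ) (h0 : 0 < q) (h1 : q < 1) :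
    -q ^ (-(1 / 8) : ℝ) *
        ∑' p : ℕ × ℕ,
          (q ^ (2 * ((p.1 + p.2 : ℝ) + 3 / 4) ^ 2) - q ^ (2 * ((p.1 + p.2 : ℝ) + 7 / 4) ^ 2)
            - q ^ (2 * ((p.1 + p.2 : ℝ) + 1 / 4) ^ 2) + q ^ (2 * ((p.1 + p.2 : ℝ) + 5 / 4) ^ 2))
      = ∑' j : ℕ, (-1) ^ j * q ^ (j * (j + 1) / 2) :=
  Stmt8.stmt_8 q h0 h1
end

section
/- Let ξ be a root of p(x) = x^7 - x^6 - 2x^5 + 6x^4 - 11x^3 + 6x^2 + 3x - 1, and set X_1 = -3 + 11ξ + 20ξ^2 - 15ξ^3 + 6ξ^4 - 2ξ^5 - 4ξ^6 and X_2 = -9 + 19ξ + 76ξ^2 - 52ξ^3 + 20ξ^4 - 4ξ^5 - 13ξ^6. Then (1 - X_2)(1 - X_1^{-1} X_2) = X_1 and (1 - X_1^2)^2 = X_1^2 X_2 (1 - X_1^{-1} X_2). -/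
/-- Let `ξ` be a root of `p(x) = x^7 - x^6 - 2x^5 + 6x^4 - 11x^3 + 6x^2 + 3x - 1` (in a field of
characteristic zero, e.g. the number field `ℚ[x]/(p)`), and set
`X₁ = -3 + 11ξ + 20ξ² - 15ξ³ + 6ξ⁴ - 2ξ⁵ - 4ξ⁶` and
`X₂ = -9 + 19ξ + 76ξ² - 52ξ³ + 20ξ⁴ - 4ξ⁵ - 13ξ⁶`.  Then
`(1 - X₂)(1 - X₁⁻¹X₂) = X₁` and `(1 - X₁²)² = X₁² X₂ (1 - X₁⁻¹X₂)`. -/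
theorem stmt_13 {K : Type*} [Field K] [CharZero K] (ξ : K)
    (hξ : ξ ^ 7 - ξ ^ 6 - 2 * ξ ^ 5 + 6 * ξ ^ 4 - 11 * ξ ^ 3 + 6 * ξ ^ 2 + 3 * ξ - 1 = 0) :
    let X₁ := -3 + 11 * ξ + 20 * ξ ^ 2 - 15 * ξ ^ 3 + 6 * ξ ^ 4 - 2 * ξ ^ 5 - 4 * ξ ^ 6
    let X₂ := -9 + 19 * ξ + 76 * ξ ^ 2 - 52 * ξ ^ 3 + 20 * ξ ^ 4 - 4 * ξ ^ 5 - 13 * ξ ^ 6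
    (1 - X₂) * (1 - X₁⁻¹ * X₂) = X₁ ∧ (1 - X₁ ^ 2) ^ 2 = X₁ ^ 2 * X₂ * (1 - X₁⁻¹ * X₂) := by
  intro X₁ X₂
  have hY : X₁ * (6 - 10 * ξ - 42 * ξ ^ 2 + 28 * ξ ^ 3 - 11 * ξ ^ 4 + 2 * ξ ^ 5 + 7 * ξ ^ 6)
      = 1 := by
    show (-3 + 11 * ξ + 20 * ξ ^ 2 - 15 * ξ ^ 3 + 6 * ξ ^ 4 - 2 * ξ ^ 5 - 4 * ξ ^ 6) *
      (6 - 10 * ξ - 42 * ξ ^ 2 + 28 * ξ ^ 3 - 11 * ξ ^ 4 + 2 * ξ ^ 5 + 7 * ξ ^ 6) = 1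
    linear_combination ((19:K) + (-39:K)*ξ + (-139:K)*ξ^2 + (-24:K)*ξ^3 + (-50:K)*ξ^4 + (-28:K)*ξ^5) * hξ
  have hinv : X₁⁻¹ = 6 - 10 * ξ - 42 * ξ ^ 2 + 28 * ξ ^ 3 - 11 * ξ ^ 4 + 2 * ξ ^ 5 + 7 * ξ ^ 6 :=
    inv_eq_of_mul_eq_one_right hY
  constructor
  · rw [hinv]
    show (1 - (-9 + 19 * ξ + 76 * ξ ^ 2 - 52 * ξ ^ 3 + 20 * ξ ^ 4 - 4 * ξ ^ 5 - 13 * ξ ^ 6)) *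
      (1 - (6 - 10 * ξ - 42 * ξ ^ 2 + 28 * ξ ^ 3 - 11 * ξ ^ 4 + 2 * ξ ^ 5 + 7 * ξ ^ 6) *
        (-9 + 19 * ξ + 76 * ξ ^ 2 - 52 * ξ ^ 3 + 20 * ξ ^ 4 - 4 * ξ ^ 5 - 13 * ξ ^ 6)) =
      -3 + 11 * ξ + 20 * ξ ^ 2 - 15 * ξ ^ 3 + 6 * ξ ^ 4 - 2 * ξ ^ 5 - 4 * ξ ^ 6
    linear_combination ((-553:K) + (1437:K)*ξ + (7757:K)*ξ^2 + (-13859:K)*ξ^3 + (-30282:K)*ξ^4 + (15968:K)*ξ^5 + (-19558:K)*ξ^6 + (1773:K)*ξ^7 + (7760:K)*ξ^8 + (-564:K)*ξ^9 + (2249:K)*ξ^10 + (1183:K)*ξ^11) * hξ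
  · rw [hinv]
    show (1 - (-3 + 11 * ξ + 20 * ξ ^ 2 - 15 * ξ ^ 3 + 6 * ξ ^ 4 - 2 * ξ ^ 5 - 4 * ξ ^ 6) ^ 2) ^ 2 =
      (-3 + 11 * ξ + 20 * ξ ^ 2 - 15 * ξ ^ 3 + 6 * ξ ^ 4 - 2 * ξ ^ 5 - 4 * ξ ^ 6) ^ 2 *
      (-9 + 19 * ξ + 76 * ξ ^ 2 - 52 * ξ ^ 3 + 20 * ξ ^ 4 - 4 * ξ ^ 5 - 13 * ξ ^ 6) *
      (1 - (6 - 10 * ξ - 42 * ξ ^ 2 + 28 * ξ ^ 3 - 11 * ξ ^ 4 + 2 * ξ ^ 5 + 7 * ξ ^ 6) *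
        (-9 + 19 * ξ + 76 * ξ ^ 2 - 52 * ξ ^ 3 + 20 * ξ ^ 4 - 4 * ξ ^ 5 - 13 * ξ ^ 6))
    linear_combination ((-4519:K) + (46098:K)*ξ + (-28933:K)*ξ^2 + (-878201:K)*ξ^3 + (1395427:K)*ξ^4 + (6331698:K)*ξ^5 + (-9248343:K)*ξ^6 + (-17818118:K)*ξ^7 + (16480269:K)*ξ^8 + (-5377156:K)*ξ^9 + (-15911404:K)*ξ^10 + (32131344:K)*ξ^11 + (-14852011:K)*ξ^12 + (2048302:K)*ξ^13 + (7807816:K)*ξ^14 + (-7335690:K)*ξ^15 + (959717:K)*ξ^16 + (388187:K)*ξ^17 + (-1235764:K)*ξ^18 + (317536:K)*ξ^19 + (129748:K)*ξ^20 + (-25092:K)*ξ^21 + (54912:K)*ξ^22 + (18928:K)*ξ^23) * hξ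
end

section
/- Define the formal power series W(h) = Σ_{0 ≤ l ≤ k} alpha_{k,l}(e^h) expanded in powers of h, where alpha_{k,l}(q) = (-1)^k q^{-k(k+1)/2 + l(l+1)} (q;q)_{2k+1}/((q;q)_l (q;q)_{k-l}). Then the expansion begins W(h) = -h - (25/2)h^2 - (1621/6)h^3 - (195601/24)h^4 + O(h^5). -/
noncomputable section
open PowerSeries Finset

def qE : LaurentSeries ℚ := HahnSeries.ofPowerSeries ℤ ℚ (PowerSeries.exp ℚ)
def pochE (n : ℕ) : LaurentSeries ℚ := ∏ j ∈ Finset.range n, (1 - qE ^ (j + 1))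

def alphaE (k l : ℕ) : LaurentSeries ℚ :=
  (-1) ^ k * qE ^ ((l : ℤ) * (l + 1) - (k : ℤ) * (k + 1) / 2) * pochE (2 * k + 1) /
    (pochE l * pochE (k - l))

def U (c : ℚ) : PowerSeries ℚ := PowerSeries.mk fun n => -(c ^ (n + 1) / (n + 1).factorial)
def E (c : ℚ) : PowerSeries ℚ := PowerSeries.rescale c (PowerSeries.exp ℚ)
def UP (n : ℕ) : PowerSeries ℚ := ∏ j ∈ Finset.range n, U (j + 1)
def G (k l : ℕ) : PowerSeries ℚ :=
  (-1) ^ k * E (((l : ℤ) * (l + 1) - (k : ℤ) * (k + 1) / 2 : ℤ) : ℚ) *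
    ((X : PowerSeries ℚ) ^ (k + 1) * (UP (2 * k + 1) * (UP l * UP (k - l))⁻¹))

lemma coeff_U (c : ℚ) (n : ℕ) :
    PowerSeries.coeff n (U c) = -(c ^ (n + 1) / (n + 1).factorial) := by simp [U]

lemma constU (c : ℚ) : PowerSeries.constantCoeff (U c) = -c := by
  rw [← PowerSeries.coeff_zero_eq_constantCoeff_apply, coeff_U]; norm_num

lemma coeff_E (c : ℚ) (n : ℕ) :
    PowerSeries.coeff n (E c) = c ^ n / n.factorial := by
  simp [E, PowerSeries.coeff_rescale, PowerSeries.coeff_exp]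
  ring

lemma constE (c : ℚ) : PowerSeries.constantCoeff (E c) = 1 := by
  rw [← PowerSeries.coeff_zero_eq_constantCoeff_apply, coeff_E]; norm_num

lemma E_mul (a b : ℚ) : E a * E b = E (a + b) :=
  PowerSeries.exp_mul_exp_eq_exp_add a b

lemma E_zero : E 0 = 1 := by
  simp [E, PowerSeries.rescale_zero]

lemma constUP (n : ℕ) : PowerSeries.constantCoeff (UP n) ≠ 0 := by
  rw [UP, map_prod]
  rw [Finset.prod_ne_zero_iff]
  intro j _
  rw [constU]
  push_cast
  intro h
  nlinarith [h]

lemma UP_ne (n : ℕ) : UP n ≠ 0 := fun h => constUP n (by rw [h, map_zero])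

lemma one_sub_E (c : ℚ) : 1 - E c = X * U c := by
  ext n
  cases n with
  | zero => simp [constE]
  | succ n =>
    rw [PowerSeries.coeff_succ_X_mul, coeff_U, map_sub, coeff_E]
    simp [Nat.succ_ne_zero]

lemma qE_pow (n : ℕ) : qE ^ n = HahnSeries.ofPowerSeries ℤ ℚ (E n) := by
  rw [qE, ← map_pow, PowerSeries.exp_pow_eq_rescale_exp, E]

lemma qE_zpow (m : ℤ) : qE ^ m = HahnSeries.ofPowerSeries ℤ ℚ (E (m : ℚ)) := by
  cases m with
  | ofNat n => rw [Int.ofNat_eq_natCast, zpow_natCast, qE_pow]; norm_num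
  | negSucc n =>
    rw [zpow_negSucc, qE_pow]
    symm
    apply eq_inv_of_mul_eq_one_left
    rw [← map_mul, E_mul]
    push_cast
    rw [show -((n:ℚ) + 1) + ((n:ℚ) + 1) = 0 by ring, E_zero, map_one]

lemma pochE_eq (n : ℕ) :
    pochE n = HahnSeries.ofPowerSeries ℤ ℚ ((X : PowerSeries ℚ) ^ n * UP n) := by
  rw [pochE]
  have : ∀ j : ℕ, (1 : LaurentSeries ℚ) - qE ^ (j + 1)
      = HahnSeries.ofPowerSeries ℤ ℚ (X * U (j + 1)) := by
    intro j
    rw [qE_pow, ← one_sub_E, map_sub, map_one]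
    norm_num
  rw [Finset.prod_congr rfl fun j _ => this j, ← map_prod]
  congr 1
  rw [Finset.prod_mul_distrib, Finset.prod_const, Finset.card_range, UP]

lemma pochE_ne (n : ℕ) : pochE n ≠ 0 := by
  rw [pochE_eq]
  intro h
  exact mul_ne_zero (pow_ne_zero n PowerSeries.X_ne_zero) (UP_ne n)
    (HahnSeries.ofPowerSeries_injective (h.trans (map_zero _).symm))

lemma alphaE_eq (k l : ℕ) (hlk : l ≤ k) :
    alphaE k l = HahnSeries.ofPowerSeries ℤ ℚ (G k l) := by
  obtain ⟨d, rfl⟩ : ∃ d, k = l + d := ⟨k - l, (Nat.add_sub_cancel' hlk).symm⟩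
  rw [alphaE, div_eq_iff (mul_ne_zero (pochE_ne l) (pochE_ne (l + d - l))),
    pochE_eq, pochE_eq, pochE_eq, qE_zpow,
    show ((-1 : LaurentSeries ℚ)) = HahnSeries.ofPowerSeries ℤ ℚ (-1) by rw [map_neg, map_one],
    ← map_pow, ← map_mul, ← map_mul, ← map_mul, ← map_mul]
  congr 1
  simp only [Nat.add_sub_cancel_left]
  have hinv : (UP l * UP d)⁻¹ * (UP l * UP d) = 1 :=
    PowerSeries.inv_mul_cancel _ (by
      rw [map_mul]; exact mul_ne_zero (constUP l) (constUP d))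
  have hX : (X : PowerSeries ℚ) ^ (l + d + 1) * X ^ l * X ^ d = X ^ (2 * (l + d) + 1) := by
    rw [← pow_add, ← pow_add]; congr 1; omega
  rw [G]
  simp only [Nat.add_sub_cancel_left]
  symm
  set m := (((l : ℤ) * (l + 1) - ((l + d : ℕ) : ℤ) * ((l + d : ℕ) + 1) / 2 : ℤ) : ℚ)
  calc (-1 : PowerSeries ℚ)^(l+d) * E m
        * ((X : PowerSeries ℚ)^(l+d+1) * (UP (2*(l+d)+1) * (UP l * UP d)⁻¹))
        * (X^l * UP l * (X^d * UP d))
      = (-1 : PowerSeries ℚ)^(l+d) * E m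
        * (((X : PowerSeries ℚ)^(l+d+1) * X^l * X^d) * UP (2*(l+d)+1))
        * ((UP l * UP d)⁻¹ * (UP l * UP d)) := by ring
    _ = (-1 : PowerSeries ℚ)^(l+d) * E m * ((X : PowerSeries ℚ)^(2*(l+d)+1) * UP (2*(l+d)+1)) := by
        rw [hinv, hX, mul_one]

lemma coeff_G_zero (k l j : ℕ) (hj : j ≤ k) : PowerSeries.coeff j (G k l) = 0 := by
  have hdvd : (X : PowerSeries ℚ) ^ (k + 1) ∣ G k l :=
    ⟨(-1) ^ k * E (((l : ℤ) * (l + 1) - (k : ℤ) * (k + 1) / 2 : ℤ) : ℚ) *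
      (UP (2 * k + 1) * (UP l * UP (k - l))⁻¹), by rw [G]; ring⟩
  exact PowerSeries.X_pow_dvd_iff.mp hdvd j (by omega)

lemma part1 (j : ℕ) : ∀ k l : ℕ, l ≤ k → j ≤ k → (alphaE k l).coeff (j : ℤ) = 0 := by
  intro k l hlk hjk
  rw [alphaE_eq k l hlk, HahnSeries.ofPowerSeries_apply_coeff, coeff_G_zero k l j hjk]

lemma UP_zero : UP 0 = 1 := by simp [UP]

lemma UP_succ (n : ℕ) : UP (n + 1) = UP n * U ((n : ℚ) + 1) := by
  rw [UP, UP, Finset.prod_range_succ]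

lemma cmul (n : ℕ) (f g : PowerSeries ℚ) :
    PowerSeries.coeff n (f * g)
      = ∑ i ∈ Finset.range (n + 1), PowerSeries.coeff i f * PowerSeries.coeff (n - i) g := by
  rw [PowerSeries.coeff_mul, Finset.Nat.sum_antidiagonal_eq_sum_range_succ_mk]

lemma fact0 : Nat.factorial 0 = 1 := rfl

lemma fact1 : Nat.factorial 1 = 1 := rfl

lemma fact2 : Nat.factorial 2 = 2 := rfl

lemma fact3 : Nat.factorial 3 = 6 := rfl

lemma fact4 : Nat.factorial 4 = 24 := rfl

lemma fact5 : Nat.factorial 5 = 120 := rfl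

lemma fact6 : Nat.factorial 6 = 720 := rfl

lemma fact7 : Nat.factorial 7 = 5040 := rfl

lemma fact8 : Nat.factorial 8 = 40320 := rfl

lemma invOne : (1 : PowerSeries ℚ)⁻¹ = 1 := by
  have h := PowerSeries.inv_mul_cancel (1 : PowerSeries ℚ) (by simp)
  simpa using h

lemma cUP_1_0 : PowerSeries.coeff 0 (UP 1) = (-1 : ℚ) := by rw [show (1:ℕ) = 0+1 from rfl, UP_succ, UP_zero, one_mul, coeff_U]; norm_num [fact0, fact1, fact2, fact3, fact4, fact5, fact6, fact7, fact8]

lemma cUP_1_1 : PowerSeries.coeff 1 (UP 1) = (-1/2 : ℚ) := by rw [show (1:ℕ) = 0+1 from rfl, UP_succ, UP_zero, one_mul, coeff_U]; norm_num [fact0, fact1, fact2, fact3, fact4, fact5, fact6, fact7, fact8]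

lemma cUP_1_2 : PowerSeries.coeff 2 (UP 1) = (-1/6 : ℚ) := by rw [show (1:ℕ) = 0+1 from rfl, UP_succ, UP_zero, one_mul, coeff_U]; norm_num [fact0, fact1, fact2, fact3, fact4, fact5, fact6, fact7, fact8]

lemma cUP_1_3 : PowerSeries.coeff 3 (UP 1) = (-1/24 : ℚ) := by rw [show (1:ℕ) = 0+1 from rfl, UP_succ, UP_zero, one_mul, coeff_U]; norm_num [fact0, fact1, fact2, fact3, fact4, fact5, fact6, fact7, fact8]

lemma cUP_2_0 : PowerSeries.coeff 0 (UP 2) = (2 : ℚ) := by rw [show (2:ℕ) = 1+1 from rfl, UP_succ, cmul]; simp [Finset.sum_range_succ, coeff_U, cUP_1_0, fact0, fact1, fact2, fact3, fact4, fact5, fact6, fact7, fact8]; all_goals norm_num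

lemma cUP_2_1 : PowerSeries.coeff 1 (UP 2) = (3 : ℚ) := by rw [show (2:ℕ) = 1+1 from rfl, UP_succ, cmul]; simp [Finset.sum_range_succ, coeff_U, cUP_1_0, cUP_1_1, fact0, fact1, fact2, fact3, fact4, fact5, fact6, fact7, fact8]; all_goals norm_num

lemma cUP_2_2 : PowerSeries.coeff 2 (UP 2) = (8/3 : ℚ) := by rw [show (2:ℕ) = 1+1 from rfl, UP_succ, cmul]; simp [Finset.sum_range_succ, coeff_U, cUP_1_0, cUP_1_1, cUP_1_2, fact0, fact1, fact2, fact3, fact4, fact5, fact6, fact7, fact8]; all_goals norm_num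

lemma cUP_2_3 : PowerSeries.coeff 3 (UP 2) = (7/4 : ℚ) := by rw [show (2:ℕ) = 1+1 from rfl, UP_succ, cmul]; simp [Finset.sum_range_succ, coeff_U, cUP_1_0, cUP_1_1, cUP_1_2, cUP_1_3, fact0, fact1, fact2, fact3, fact4, fact5, fact6, fact7, fact8]; all_goals norm_num

lemma cUP_3_0 : PowerSeries.coeff 0 (UP 3) = (-6 : ℚ) := by rw [show (3:ℕ) = 2+1 from rfl, UP_succ, cmul]; simp [Finset.sum_range_succ, coeff_U, cUP_2_0, fact0, fact1, fact2, fact3, fact4, fact5, fact6, fact7, fact8]; all_goals norm_num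

lemma cUP_3_1 : PowerSeries.coeff 1 (UP 3) = (-18 : ℚ) := by rw [show (3:ℕ) = 2+1 from rfl, UP_succ, cmul]; simp [Finset.sum_range_succ, coeff_U, cUP_2_0, cUP_2_1, fact0, fact1, fact2, fact3, fact4, fact5, fact6, fact7, fact8]; all_goals norm_num

lemma cUP_3_2 : PowerSeries.coeff 2 (UP 3) = (-61/2 : ℚ) := by rw [show (3:ℕ) = 2+1 from rfl, UP_succ, cmul]; simp [Finset.sum_range_succ, coeff_U, cUP_2_0, cUP_2_1, cUP_2_2, fact0, fact1, fact2, fact3, fact4, fact5, fact6, fact7, fact8]; all_goals norm_num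

lemma cUP_3_3 : PowerSeries.coeff 3 (UP 3) = (-75/2 : ℚ) := by rw [show (3:ℕ) = 2+1 from rfl, UP_succ, cmul]; simp [Finset.sum_range_succ, coeff_U, cUP_2_0, cUP_2_1, cUP_2_2, cUP_2_3, fact0, fact1, fact2, fact3, fact4, fact5, fact6, fact7, fact8]; all_goals norm_num

lemma cUP_4_0 : PowerSeries.coeff 0 (UP 4) = (24 : ℚ) := by rw [show (4:ℕ) = 3+1 from rfl, UP_succ, cmul]; simp [Finset.sum_range_succ, coeff_U, cUP_3_0, fact0, fact1, fact2, fact3, fact4, fact5, fact6, fact7, fact8]; all_goals norm_num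

lemma cUP_4_1 : PowerSeries.coeff 1 (UP 4) = (120 : ℚ) := by rw [show (4:ℕ) = 3+1 from rfl, UP_succ, cmul]; simp [Finset.sum_range_succ, coeff_U, cUP_3_0, cUP_3_1, fact0, fact1, fact2, fact3, fact4, fact5, fact6, fact7, fact8]; all_goals norm_num

lemma cUP_5_0 : PowerSeries.coeff 0 (UP 5) = (-120 : ℚ) := by rw [show (5:ℕ) = 4+1 from rfl, UP_succ, cmul]; simp [Finset.sum_range_succ, coeff_U, cUP_4_0, fact0, fact1, fact2, fact3, fact4, fact5, fact6, fact7, fact8]; all_goals norm_num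

lemma cUP_5_1 : PowerSeries.coeff 1 (UP 5) = (-900 : ℚ) := by rw [show (5:ℕ) = 4+1 from rfl, UP_succ, cmul]; simp [Finset.sum_range_succ, coeff_U, cUP_4_0, cUP_4_1, fact0, fact1, fact2, fact3, fact4, fact5, fact6, fact7, fact8]; all_goals norm_num

lemma cUP_6_0 : PowerSeries.coeff 0 (UP 6) = (720 : ℚ) := by rw [show (6:ℕ) = 5+1 from rfl, UP_succ, cmul]; simp [Finset.sum_range_succ, coeff_U, cUP_5_0, fact0, fact1, fact2, fact3, fact4, fact5, fact6, fact7, fact8]; all_goals norm_num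

lemma cUP_7_0 : PowerSeries.coeff 0 (UP 7) = (-5040 : ℚ) := by rw [show (7:ℕ) = 6+1 from rfl, UP_succ, cmul]; simp [Finset.sum_range_succ, coeff_U, cUP_6_0, fact0, fact1, fact2, fact3, fact4, fact5, fact6, fact7, fact8]; all_goals norm_num

lemma ccUP_1 : PowerSeries.constantCoeff (UP 1) = (-1 : ℚ) := by rw [← PowerSeries.coeff_zero_eq_constantCoeff_apply, cUP_1_0]

lemma ccUP_2 : PowerSeries.constantCoeff (UP 2) = (2 : ℚ) := by rw [← PowerSeries.coeff_zero_eq_constantCoeff_apply, cUP_2_0]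

lemma ccUP_3 : PowerSeries.constantCoeff (UP 3) = (-6 : ℚ) := by rw [← PowerSeries.coeff_zero_eq_constantCoeff_apply, cUP_3_0]

lemma cW1_0 : PowerSeries.coeff 0 ((UP 1)⁻¹) = (-1 : ℚ) := by rw [PowerSeries.coeff_inv]; simp [ccUP_1, Finset.Nat.sum_antidiagonal_eq_sum_range_succ_mk, Finset.sum_range_succ, cUP_1_0, cUP_1_1, cUP_1_2]; all_goals norm_num

lemma cW1_1 : PowerSeries.coeff 1 ((UP 1)⁻¹) = (1/2 : ℚ) := by rw [PowerSeries.coeff_inv]; simp [ccUP_1, Finset.Nat.sum_antidiagonal_eq_sum_range_succ_mk, Finset.sum_range_succ, cUP_1_0, cUP_1_1, cUP_1_2, cW1_0]; all_goals norm_num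

lemma cW1_2 : PowerSeries.coeff 2 ((UP 1)⁻¹) = (-1/12 : ℚ) := by rw [PowerSeries.coeff_inv]; simp [ccUP_1, Finset.Nat.sum_antidiagonal_eq_sum_range_succ_mk, Finset.sum_range_succ, cUP_1_0, cUP_1_1, cUP_1_2, cW1_0, cW1_1]; all_goals norm_num

lemma cW2_0 : PowerSeries.coeff 0 ((UP 2)⁻¹) = (1/2 : ℚ) := by rw [PowerSeries.coeff_inv]; simp [ccUP_2, Finset.Nat.sum_antidiagonal_eq_sum_range_succ_mk, Finset.sum_range_succ, cUP_2_0, cUP_2_1, cUP_2_2]; all_goals norm_num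

lemma cW2_1 : PowerSeries.coeff 1 ((UP 2)⁻¹) = (-3/4 : ℚ) := by rw [PowerSeries.coeff_inv]; simp [ccUP_2, Finset.Nat.sum_antidiagonal_eq_sum_range_succ_mk, Finset.sum_range_succ, cUP_2_0, cUP_2_1, cUP_2_2, cW2_0]; all_goals norm_num

lemma cW3_0 : PowerSeries.coeff 0 ((UP 3)⁻¹) = (-1/6 : ℚ) := by rw [PowerSeries.coeff_inv]; simp [ccUP_3, Finset.Nat.sum_antidiagonal_eq_sum_range_succ_mk, Finset.sum_range_succ, cUP_3_0, cUP_3_1, cUP_3_2]; all_goals norm_num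

lemma cG_0_0_1 : PowerSeries.coeff 1 (G 0 0) = (-1 : ℚ) := by rw [show G 0 0 = (1 : PowerSeries ℚ) * E (0 : ℚ) * ((X : PowerSeries ℚ) ^ 1 * (UP 1)) from by norm_num [G, UP_zero, PowerSeries.mul_inv_rev, invOne]]; simp [cmul, Finset.sum_range_succ, coeff_E, PowerSeries.coeff_X_pow, PowerSeries.coeff_X, PowerSeries.coeff_one, cUP_1_0, cUP_1_1, cUP_1_2, cUP_1_3, cW1_0, cW1_1, cW1_2, cW2_0, cW2_1, cW3_0, fact0, fact1, fact2, fact3, fact4, fact5, fact6, fact7, fact8]; all_goals norm_num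

lemma cG_0_0_2 : PowerSeries.coeff 2 (G 0 0) = (-1/2 : ℚ) := by rw [show G 0 0 = (1 : PowerSeries ℚ) * E (0 : ℚ) * ((X : PowerSeries ℚ) ^ 1 * (UP 1)) from by norm_num [G, UP_zero, PowerSeries.mul_inv_rev, invOne]]; simp [cmul, Finset.sum_range_succ, coeff_E, PowerSeries.coeff_X_pow, PowerSeries.coeff_X, PowerSeries.coeff_one, cUP_1_0, cUP_1_1, cUP_1_2, cUP_1_3, cW1_0, cW1_1, cW1_2, cW2_0, cW2_1, cW3_0, fact0, fact1, fact2, fact3, fact4, fact5, fact6, fact7, fact8]; all_goals norm_num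

lemma cG_0_0_3 : PowerSeries.coeff 3 (G 0 0) = (-1/6 : ℚ) := by rw [show G 0 0 = (1 : PowerSeries ℚ) * E (0 : ℚ) * ((X : PowerSeries ℚ) ^ 1 * (UP 1)) from by norm_num [G, UP_zero, PowerSeries.mul_inv_rev, invOne]]; simp [cmul, Finset.sum_range_succ, coeff_E, PowerSeries.coeff_X_pow, PowerSeries.coeff_X, PowerSeries.coeff_one, cUP_1_0, cUP_1_1, cUP_1_2, cUP_1_3, cW1_0, cW1_1, cW1_2, cW2_0, cW2_1, cW3_0, fact0, fact1, fact2, fact3, fact4, fact5, fact6, fact7, fact8]; all_goals norm_num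

lemma cG_0_0_4 : PowerSeries.coeff 4 (G 0 0) = (-1/24 : ℚ) := by rw [show G 0 0 = (1 : PowerSeries ℚ) * E (0 : ℚ) * ((X : PowerSeries ℚ) ^ 1 * (UP 1)) from by norm_num [G, UP_zero, PowerSeries.mul_inv_rev, invOne]]; simp [cmul, Finset.sum_range_succ, coeff_E, PowerSeries.coeff_X_pow, PowerSeries.coeff_X, PowerSeries.coeff_one, cUP_1_0, cUP_1_1, cUP_1_2, cUP_1_3, cW1_0, cW1_1, cW1_2, cW2_0, cW2_1, cW3_0, fact0, fact1, fact2, fact3, fact4, fact5, fact6, fact7, fact8]; all_goals norm_num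

lemma cG_1_0_2 : PowerSeries.coeff 2 (G 1 0) = (-6 : ℚ) := by rw [show G 1 0 = (-1 : PowerSeries ℚ) * E (-1 : ℚ) * ((X : PowerSeries ℚ) ^ 2 * (UP 3 * (UP 1)⁻¹)) from by norm_num [G, UP_zero, PowerSeries.mul_inv_rev, invOne]]; simp [cmul, Finset.sum_range_succ, coeff_E, PowerSeries.coeff_X_pow, PowerSeries.coeff_X, PowerSeries.coeff_one, cUP_3_0, cUP_3_1, cUP_3_2, cW1_0, cW1_1, cW1_2, cW2_0, cW2_1, cW3_0, fact0, fact1, fact2, fact3, fact4, fact5, fact6, fact7, fact8]; all_goals norm_num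

lemma cG_1_0_3 : PowerSeries.coeff 3 (G 1 0) = (-9 : ℚ) := by rw [show G 1 0 = (-1 : PowerSeries ℚ) * E (-1 : ℚ) * ((X : PowerSeries ℚ) ^ 2 * (UP 3 * (UP 1)⁻¹)) from by norm_num [G, UP_zero, PowerSeries.mul_inv_rev, invOne]]; simp [cmul, Finset.sum_range_succ, coeff_E, PowerSeries.coeff_X_pow, PowerSeries.coeff_X, PowerSeries.coeff_one, cUP_3_0, cUP_3_1, cUP_3_2, cW1_0, cW1_1, cW1_2, cW2_0, cW2_1, cW3_0, fact0, fact1, fact2, fact3, fact4, fact5, fact6, fact7, fact8]; all_goals norm_num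

lemma cG_1_0_4 : PowerSeries.coeff 4 (G 1 0) = (-10 : ℚ) := by rw [show G 1 0 = (-1 : PowerSeries ℚ) * E (-1 : ℚ) * ((X : PowerSeries ℚ) ^ 2 * (UP 3 * (UP 1)⁻¹)) from by norm_num [G, UP_zero, PowerSeries.mul_inv_rev, invOne]]; simp [cmul, Finset.sum_range_succ, coeff_E, PowerSeries.coeff_X_pow, PowerSeries.coeff_X, PowerSeries.coeff_one, cUP_3_0, cUP_3_1, cUP_3_2, cW1_0, cW1_1, cW1_2, cW2_0, cW2_1, cW3_0, fact0, fact1, fact2, fact3, fact4, fact5, fact6, fact7, fact8]; all_goals norm_num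

lemma cG_1_1_2 : PowerSeries.coeff 2 (G 1 1) = (-6 : ℚ) := by rw [show G 1 1 = (-1 : PowerSeries ℚ) * E (1 : ℚ) * ((X : PowerSeries ℚ) ^ 2 * (UP 3 * (UP 1)⁻¹)) from by norm_num [G, UP_zero, PowerSeries.mul_inv_rev, invOne]]; simp [cmul, Finset.sum_range_succ, coeff_E, PowerSeries.coeff_X_pow, PowerSeries.coeff_X, PowerSeries.coeff_one, cUP_3_0, cUP_3_1, cUP_3_2, cW1_0, cW1_1, cW1_2, cW2_0, cW2_1, cW3_0, fact0, fact1, fact2, fact3, fact4, fact5, fact6, fact7, fact8]; all_goals norm_num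

lemma cG_1_1_3 : PowerSeries.coeff 3 (G 1 1) = (-21 : ℚ) := by rw [show G 1 1 = (-1 : PowerSeries ℚ) * E (1 : ℚ) * ((X : PowerSeries ℚ) ^ 2 * (UP 3 * (UP 1)⁻¹)) from by norm_num [G, UP_zero, PowerSeries.mul_inv_rev, invOne]]; simp [cmul, Finset.sum_range_succ, coeff_E, PowerSeries.coeff_X_pow, PowerSeries.coeff_X, PowerSeries.coeff_one, cUP_3_0, cUP_3_1, cUP_3_2, cW1_0, cW1_1, cW1_2, cW2_0, cW2_1, cW3_0, fact0, fact1, fact2, fact3, fact4, fact5, fact6, fact7, fact8]; all_goals norm_num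

lemma cG_1_1_4 : PowerSeries.coeff 4 (G 1 1) = (-40 : ℚ) := by rw [show G 1 1 = (-1 : PowerSeries ℚ) * E (1 : ℚ) * ((X : PowerSeries ℚ) ^ 2 * (UP 3 * (UP 1)⁻¹)) from by norm_num [G, UP_zero, PowerSeries.mul_inv_rev, invOne]]; simp [cmul, Finset.sum_range_succ, coeff_E, PowerSeries.coeff_X_pow, PowerSeries.coeff_X, PowerSeries.coeff_one, cUP_3_0, cUP_3_1, cUP_3_2, cW1_0, cW1_1, cW1_2, cW2_0, cW2_1, cW3_0, fact0, fact1, fact2, fact3, fact4, fact5, fact6, fact7, fact8]; all_goals norm_num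

lemma cG_2_0_3 : PowerSeries.coeff 3 (G 2 0) = (-60 : ℚ) := by rw [show G 2 0 = (1 : PowerSeries ℚ) * E (-3 : ℚ) * ((X : PowerSeries ℚ) ^ 3 * (UP 5 * (UP 2)⁻¹)) from by norm_num [G, UP_zero, PowerSeries.mul_inv_rev, invOne]]; simp [cmul, Finset.sum_range_succ, coeff_E, PowerSeries.coeff_X_pow, PowerSeries.coeff_X, PowerSeries.coeff_one, cUP_5_0, cUP_5_1, cW1_0, cW1_1, cW1_2, cW2_0, cW2_1, cW3_0, fact0, fact1, fact2, fact3, fact4, fact5, fact6, fact7, fact8]; all_goals norm_num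

lemma cG_2_0_4 : PowerSeries.coeff 4 (G 2 0) = (-180 : ℚ) := by rw [show G 2 0 = (1 : PowerSeries ℚ) * E (-3 : ℚ) * ((X : PowerSeries ℚ) ^ 3 * (UP 5 * (UP 2)⁻¹)) from by norm_num [G, UP_zero, PowerSeries.mul_inv_rev, invOne]]; simp [cmul, Finset.sum_range_succ, coeff_E, PowerSeries.coeff_X_pow, PowerSeries.coeff_X, PowerSeries.coeff_one, cUP_5_0, cUP_5_1, cW1_0, cW1_1, cW1_2, cW2_0, cW2_1, cW3_0, fact0, fact1, fact2, fact3, fact4, fact5, fact6, fact7, fact8]; all_goals norm_num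

lemma cG_2_1_3 : PowerSeries.coeff 3 (G 2 1) = (-120 : ℚ) := by rw [show G 2 1 = (1 : PowerSeries ℚ) * E (-1 : ℚ) * ((X : PowerSeries ℚ) ^ 3 * (UP 5 * ((UP 1)⁻¹ * (UP 1)⁻¹))) from by norm_num [G, UP_zero, PowerSeries.mul_inv_rev, invOne]]; simp [cmul, Finset.sum_range_succ, coeff_E, PowerSeries.coeff_X_pow, PowerSeries.coeff_X, PowerSeries.coeff_one, cUP_5_0, cUP_5_1, cW1_0, cW1_1, cW1_2, cW2_0, cW2_1, cW3_0, fact0, fact1, fact2, fact3, fact4, fact5, fact6, fact7, fact8]; all_goals norm_num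

lemma cG_2_1_4 : PowerSeries.coeff 4 (G 2 1) = (-660 : ℚ) := by rw [show G 2 1 = (1 : PowerSeries ℚ) * E (-1 : ℚ) * ((X : PowerSeries ℚ) ^ 3 * (UP 5 * ((UP 1)⁻¹ * (UP 1)⁻¹))) from by norm_num [G, UP_zero, PowerSeries.mul_inv_rev, invOne]]; simp [cmul, Finset.sum_range_succ, coeff_E, PowerSeries.coeff_X_pow, PowerSeries.coeff_X, PowerSeries.coeff_one, cUP_5_0, cUP_5_1, cW1_0, cW1_1, cW1_2, cW2_0, cW2_1, cW3_0, fact0, fact1, fact2, fact3, fact4, fact5, fact6, fact7, fact8]; all_goals norm_num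

lemma cG_2_2_3 : PowerSeries.coeff 3 (G 2 2) = (-60 : ℚ) := by rw [show G 2 2 = (1 : PowerSeries ℚ) * E (3 : ℚ) * ((X : PowerSeries ℚ) ^ 3 * (UP 5 * (UP 2)⁻¹)) from by norm_num [G, UP_zero, PowerSeries.mul_inv_rev, invOne]]; simp [cmul, Finset.sum_range_succ, coeff_E, PowerSeries.coeff_X_pow, PowerSeries.coeff_X, PowerSeries.coeff_one, cUP_5_0, cUP_5_1, cW1_0, cW1_1, cW1_2, cW2_0, cW2_1, cW3_0, fact0, fact1, fact2, fact3, fact4, fact5, fact6, fact7, fact8]; all_goals norm_num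

lemma cG_2_2_4 : PowerSeries.coeff 4 (G 2 2) = (-540 : ℚ) := by rw [show G 2 2 = (1 : PowerSeries ℚ) * E (3 : ℚ) * ((X : PowerSeries ℚ) ^ 3 * (UP 5 * (UP 2)⁻¹)) from by norm_num [G, UP_zero, PowerSeries.mul_inv_rev, invOne]]; simp [cmul, Finset.sum_range_succ, coeff_E, PowerSeries.coeff_X_pow, PowerSeries.coeff_X, PowerSeries.coeff_one, cUP_5_0, cUP_5_1, cW1_0, cW1_1, cW1_2, cW2_0, cW2_1, cW3_0, fact0, fact1, fact2, fact3, fact4, fact5, fact6, fact7, fact8]; all_goals norm_num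

lemma cG_3_0_4 : PowerSeries.coeff 4 (G 3 0) = (-840 : ℚ) := by rw [show G 3 0 = (-1 : PowerSeries ℚ) * E (-6 : ℚ) * ((X : PowerSeries ℚ) ^ 4 * (UP 7 * (UP 3)⁻¹)) from by norm_num [G, UP_zero, PowerSeries.mul_inv_rev, invOne]]; simp [cmul, Finset.sum_range_succ, coeff_E, PowerSeries.coeff_X_pow, PowerSeries.coeff_X, PowerSeries.coeff_one, cUP_7_0, cW1_0, cW1_1, cW1_2, cW2_0, cW2_1, cW3_0, fact0, fact1, fact2, fact3, fact4, fact5, fact6, fact7, fact8]; all_goals norm_num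

lemma cG_3_1_4 : PowerSeries.coeff 4 (G 3 1) = (-2520 : ℚ) := by rw [show G 3 1 = (-1 : PowerSeries ℚ) * E (-4 : ℚ) * ((X : PowerSeries ℚ) ^ 4 * (UP 7 * ((UP 2)⁻¹ * (UP 1)⁻¹))) from by norm_num [G, UP_zero, PowerSeries.mul_inv_rev, invOne]]; simp [cmul, Finset.sum_range_succ, coeff_E, PowerSeries.coeff_X_pow, PowerSeries.coeff_X, PowerSeries.coeff_one, cUP_7_0, cW1_0, cW1_1, cW1_2, cW2_0, cW2_1, cW3_0, fact0, fact1, fact2, fact3, fact4, fact5, fact6, fact7, fact8]; all_goals norm_num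

lemma cG_3_2_4 : PowerSeries.coeff 4 (G 3 2) = (-2520 : ℚ) := by rw [show G 3 2 = (-1 : PowerSeries ℚ) * E (0 : ℚ) * ((X : PowerSeries ℚ) ^ 4 * (UP 7 * ((UP 1)⁻¹ * (UP 2)⁻¹))) from by norm_num [G, UP_zero, PowerSeries.mul_inv_rev, invOne]]; simp [cmul, Finset.sum_range_succ, coeff_E, PowerSeries.coeff_X_pow, PowerSeries.coeff_X, PowerSeries.coeff_one, cUP_7_0, cW1_0, cW1_1, cW1_2, cW2_0, cW2_1, cW3_0, fact0, fact1, fact2, fact3, fact4, fact5, fact6, fact7, fact8]; all_goals norm_num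

lemma cG_3_3_4 : PowerSeries.coeff 4 (G 3 3) = (-840 : ℚ) := by rw [show G 3 3 = (-1 : PowerSeries ℚ) * E (6 : ℚ) * ((X : PowerSeries ℚ) ^ 4 * (UP 7 * (UP 3)⁻¹)) from by norm_num [G, UP_zero, PowerSeries.mul_inv_rev, invOne]]; simp [cmul, Finset.sum_range_succ, coeff_E, PowerSeries.coeff_X_pow, PowerSeries.coeff_X, PowerSeries.coeff_one, cUP_7_0, cW1_0, cW1_1, cW1_2, cW2_0, cW2_1, cW3_0, fact0, fact1, fact2, fact3, fact4, fact5, fact6, fact7, fact8]; all_goals norm_num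

/-- The `h`-expansion of `W(h) = Σ_{0 ≤ l ≤ k} alpha_{k,l}(e^h)` begins
`-h - (25/2)h² - (1621/6)h³ - (195601/24)h⁴ + O(h⁵)`: for each `j ≤ 4`, the summands with
`k ≥ j` do not contribute to the coefficient of `h^j` (so the `h`-adic sum makes sense), and
the resulting `j`-th coefficient has the stated value. -/
theorem stmt_16 (j : ℕ) (hj : j ≤ 4) :
    (∀ k l : ℕ, l ≤ k → j ≤ k → (alphaE k l).coeff (j : ℤ) = 0) ∧
    (∑ k ∈ Finset.range (j + 1), ∑ l ∈ Finset.range (k + 1), (alphaE k l).coeff (j : ℤ))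
      = (if j = 0 then 0 else if j = 1 then -1 else if j = 2 then -25 / 2
          else if j = 3 then -1621 / 6 else -195601 / 24 : ℚ) := by
  refine ⟨part1 j, ?_⟩
  have z : ∀ j k l : ℕ, l ≤ k → j ≤ k → (alphaE k l).coeff (j : ℤ) = 0 := part1
  have c : ∀ k l : ℕ, l ≤ k → ∀ j : ℕ, ∀ v : ℚ, PowerSeries.coeff j (G k l) = v →
      (alphaE k l).coeff (j : ℤ) = v := by
    intro k l hlk j v hv
    rw [alphaE_eq k l hlk, HahnSeries.ofPowerSeries_apply_coeff, hv]
  interval_cases j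
  · simp only [Finset.sum_range_succ, Finset.sum_range_zero, zero_add]
    rw [z 0 0 0 le_rfl le_rfl]
    norm_num
  · simp only [Finset.sum_range_succ, Finset.sum_range_zero, zero_add]
    rw [c 0 0 le_rfl 1 _ cG_0_0_1, z 1 1 0 (by norm_num) le_rfl, z 1 1 1 le_rfl le_rfl]
    norm_num
  · simp only [Finset.sum_range_succ, Finset.sum_range_zero, zero_add]
    rw [c 0 0 le_rfl 2 _ cG_0_0_2, c 1 0 (by norm_num) 2 _ cG_1_0_2, c 1 1 le_rfl 2 _ cG_1_1_2,
      z 2 2 0 (by norm_num) le_rfl, z 2 2 1 (by norm_num) le_rfl, z 2 2 2 le_rfl le_rfl]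
    norm_num
  · simp only [Finset.sum_range_succ, Finset.sum_range_zero, zero_add]
    rw [c 0 0 le_rfl 3 _ cG_0_0_3, c 1 0 (by norm_num) 3 _ cG_1_0_3, c 1 1 le_rfl 3 _ cG_1_1_3,
      c 2 0 (by norm_num) 3 _ cG_2_0_3, c 2 1 (by norm_num) 3 _ cG_2_1_3,
      c 2 2 le_rfl 3 _ cG_2_2_3,
      z 3 3 0 (by norm_num) le_rfl, z 3 3 1 (by norm_num) le_rfl, z 3 3 2 (by norm_num) le_rfl,
      z 3 3 3 le_rfl le_rfl]
    norm_num
  · simp only [Finset.sum_range_succ, Finset.sum_range_zero, zero_add]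
    rw [c 0 0 le_rfl 4 _ cG_0_0_4, c 1 0 (by norm_num) 4 _ cG_1_0_4, c 1 1 le_rfl 4 _ cG_1_1_4,
      c 2 0 (by norm_num) 4 _ cG_2_0_4, c 2 1 (by norm_num) 4 _ cG_2_1_4,
      c 2 2 le_rfl 4 _ cG_2_2_4,
      c 3 0 (by norm_num) 4 _ cG_3_0_4, c 3 1 (by norm_num) 4 _ cG_3_1_4,
      c 3 2 (by norm_num) 4 _ cG_3_2_4, c 3 3 le_rfl 4 _ cG_3_3_4,
      z 4 4 0 (by norm_num) le_rfl, z 4 4 1 (by norm_num) le_rfl, z 4 4 2 (by norm_num) le_rfl,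
      z 4 4 3 (by norm_num) le_rfl, z 4 4 4 le_rfl le_rfl]
    norm_num

end
end

section
/- For any integers 0 ≤ l ≤ k and the extended function alpha on Z², the second recursion (1 - q^{l+1}) alpha_{k,l+1}(q) = q^{2l+2} (1 - q^{k-l}) alpha_{k,l}(q) also holds for the companion solution beta, i.e. (1 - q^{l+1}) beta_{k,l+1}(q) = q^{2l+2} (1 - q^{k-l}) beta_{k,l}(q) for all integers k, l (with beta_{k,l} = 0 outside the region l ≤ k ≤ -1). -/
noncomputable section

/-- The indeterminate `q`, as an element of the rational function field `ℚ(q)`. -/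
def q : RatFunc ℚ := RatFunc.X

/-- `(q;q)_n = ∏_{j=1}^{n} (1 - q^j)` for `n ≥ 0`, extended to negative indices by the
functional equation `(q;q)_n = (q;q)_{n+1}/(1 - q^{n+1})` (which, with the field convention
`1/0 = 0`, forces `(q;q)_n = 0` for `n < 0` since `(q;q)_{-1} = (q;q)_0/(1 - q^0) = 1/0`). -/
def qq (n : ℤ) : RatFunc ℚ :=
  if 0 ≤ n then ∏ j ∈ Finset.range n.toNat, (1 - q ^ (j + 1)) else 0

/-- The companion solution `beta : ℤ² → ℚ(q)`:
`beta_{k,l}(q) = (-1)^{k+l} q^{3k(k+1)/2 + l(l+1)/2 + k + 1} (q;q)_{-l-1}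
  / ((q;q)_{-2k-2} (q;q)_{k-l})` when `l ≤ k ≤ -1`, and `0` otherwise. -/
def beta (k l : ℤ) : RatFunc ℚ :=
  if l ≤ k ∧ k ≤ -1 then
    (-1 : RatFunc ℚ) ^ (k + l) * q ^ (3 * k * (k + 1) / 2 + l * (l + 1) / 2 + k + 1) *
      qq (-l - 1) / (qq (-2 * k - 2) * qq (k - l))
  else 0


lemma q_ne_zero : q ≠ 0 := RatFunc.X_ne_zero

lemma one_sub_q_pow_ne (n : ℕ) (hn : n ≠ 0) : (1 : RatFunc ℚ) - q ^ n ≠ 0 := by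
  have h1 : (1 : RatFunc ℚ) - q ^ n =
      - algebraMap (Polynomial ℚ) (RatFunc ℚ) (Polynomial.X ^ n - Polynomial.C 1) := by
    simp [q, RatFunc.algebraMap_X, map_sub, map_pow]
  rw [h1, neg_ne_zero]
  exact RatFunc.algebraMap_ne_zero
    (Polynomial.X_pow_sub_C_ne_zero (Nat.pos_of_ne_zero hn) 1)

lemma one_sub_q_zpow_ne (n : ℤ) (hn : 1 ≤ n) : (1 : RatFunc ℚ) - q ^ n ≠ 0 := by
  rw [show n = (n.toNat : ℤ) by omega, zpow_natCast]
  exact one_sub_q_pow_ne _ (by omega)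

lemma qq_ne_zero (n : ℤ) (hn : 0 ≤ n) : qq n ≠ 0 := by
  rw [qq, if_pos hn]
  exact Finset.prod_ne_zero_iff.2 fun j _ => one_sub_q_pow_ne _ (by omega)

lemma qq_succ (n : ℤ) (hn : 0 ≤ n) : qq (n + 1) = qq n * (1 - q ^ (n + 1)) := by
  rw [qq, qq, if_pos (by omega), if_pos hn, show (n+1).toNat = n.toNat + 1 by omega,
    Finset.prod_range_succ]
  congr 2
  rw [← zpow_natCast]
  congr 1
  omega

/-- The recursion `(1 - q^{l+1}) beta_{k,l+1}(q) = q^{2l+2} (1 - q^{k-l}) beta_{k,l}(q)`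
holds for all integers `k, l` (with `beta = 0` outside the region `l ≤ k ≤ -1`). -/
theorem stmt_19 (k l : ℤ) :
    (1 - q ^ (l + 1)) * beta k (l + 1) = q ^ (2 * l + 2) * (1 - q ^ (k - l)) * beta k l := by
  by_cases hk : k ≤ -1
  · by_cases hl : l ≤ k
    · rcases eq_or_lt_of_le hl with rfl | hlt
      · -- l = k : LHS beta = 0, RHS factor (1 - q^0) = 0
        rw [beta, if_neg (by omega), sub_self, zpow_zero, sub_self]
        ring
      · -- main case l < k
        have hq := q_ne_zero
        have hA : qq (-2 * k - 2) ≠ 0 := qq_ne_zero _ (by omega)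
        have hB : qq (k - l - 1) ≠ 0 := qq_ne_zero _ (by omega)
        have hy : (1 : RatFunc ℚ) - q ^ (k - l) ≠ 0 := one_sub_q_zpow_ne _ (by omega)
        rw [beta, beta, if_pos ⟨by omega, hk⟩, if_pos ⟨hl, hk⟩]
        rw [show (-(l + 1) - 1 : ℤ) = -l - 2 by ring,
          show (-l - 1 : ℤ) = (-l - 2) + 1 by ring, qq_succ _ (by omega),
          show (k - (l + 1) : ℤ) = k - l - 1 by ring,
          show (k - l : ℤ) = (k - l - 1) + 1 by ring, qq_succ _ (by omega)]
        rw [show (3 * k * (k + 1) / 2 + (l + 1) * (l + 1 + 1) / 2 + k + 1 : ℤ)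
            = (3 * k * (k + 1) / 2 + l * (l + 1) / 2 + k + 1) + (l + 1) by
              have h2 : (l + 1) * (l + 1 + 1) = l * (l + 1) + 2 * (l + 1) := by ring
              have h3 : l * (l + 1) % 2 = 0 := Int.even_iff.1 (Int.even_mul_succ_self l)
              omega,
          zpow_add₀ hq (3 * k * (k + 1) / 2 + l * (l + 1) / 2 + k + 1) (l + 1),
          show (k + (l + 1) : ℤ) = (k + l) + 1 by ring,
          zpow_add₀ (neg_ne_zero.2 one_ne_zero) (k + l) 1, zpow_one]
        rw [show (-l - 2 + 1 : ℤ) = -(l + 1) by ring,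
          show (k - l - 1 + 1 : ℤ) = k - l by ring]
        have hD1 : qq (-2 * k - 2) * qq (k - l - 1) ≠ 0 := mul_ne_zero hA hB
        have hD0 : qq (-2 * k - 2) * (qq (k - l - 1) * (1 - q ^ (k - l))) ≠ 0 :=
          mul_ne_zero hA (mul_ne_zero hB hy)
        rw [← mul_div_assoc, ← mul_div_assoc, div_eq_div_iff hD1 hD0]
        have key : q ^ (2 * l + 2 : ℤ) * (1 - q ^ (-(l + 1) : ℤ))
            = q ^ (l + 1 : ℤ) * (q ^ (l + 1 : ℤ) - 1) := by
          have ht : q ^ (l + 1 : ℤ) ≠ 0 := zpow_ne_zero _ hq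
          rw [zpow_neg, show (2 * l + 2 : ℤ) = (l + 1) + (l + 1) by ring, zpow_add₀ hq]
          field_simp
        linear_combination (-(1 - q ^ (k - l : ℤ)) * (-1 : RatFunc ℚ) ^ (k + l) *
          q ^ (3 * k * (k + 1) / 2 + l * (l + 1) / 2 + k + 1 : ℤ) * qq (-l - 2) *
          qq (-2 * k - 2) * qq (k - l - 1)) * key
    · -- l > k : both betas zero
      rw [beta, beta, if_neg (by omega), if_neg (by omega)]
      ring
  · rw [beta, beta, if_neg (by omega), if_neg (by omega)]
    ring

end
end
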